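/- (Main theorem.) For a graph G with magnetic field vector M_i ∈ ℂ^q at each vertex and Hamiltonian h(σ) = −Σ_{{i,j}∈E} J_{i,j} δ(σ_i, σ_j) − Σ_{v_i} Σ_{α=1}^q M_{i,α} δ(α, σ_i), the partition function satisfies Z(G) = V(G, ω; {X_M}_{M∈ℂ^q}, {e^{β J_{i,j}} − 1}_{{i,j}∈E(G)}), where the vertex weights are ω(v_i) = M_i and X_M = Σ_{α=1}^q e^{β M_α} for M = (M_1,…,M_q) ∈ ℂ^q. -/

import Mathlib

open Finset

structure WGraph (S : Type) (L : Type) where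
  V : Type
  E : Type
  [fV : Fintype V]
  [dV : DecidableEq V]
  [fE : Fintype E]
  [dE : DecidableEq E]
  ends : E → V × V
  ω : V → S
  γ : E → L

attribute [instance] WGraph.fV WGraph.dV WGraph.fE WGraph.dE

namespace WGraph
variable {S L : Type}

def IsLoop (G : WGraph S L) (e : G.E) : Prop := (G.ends e).1 = (G.ends e).2

def delete (G : WGraph S L) (e₀ : G.E) : WGraph S L where
  V := G.V
  E := {e : G.E // e ≠ e₀}
  ends := fun e => G.ends e.1
  ω := G.ω
  γ := fun e => G.γ e.1

def contract [Add S] (G : WGraph S L) (e₀ : G.E) (h : ¬ G.IsLoop e₀) : WGraph S L where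
  V := {v : G.V // v ≠ (G.ends e₀).2}
  E := {e : G.E // e ≠ e₀}
  ends := fun e =>
    ((if hv : (G.ends e.1).1 = (G.ends e₀).2 then ⟨(G.ends e₀).1, h⟩
        else ⟨(G.ends e.1).1, hv⟩ : {v : G.V // v ≠ (G.ends e₀).2}),
     (if hv : (G.ends e.1).2 = (G.ends e₀).2 then ⟨(G.ends e₀).1, h⟩
        else ⟨(G.ends e.1).2, hv⟩))
  ω := fun v =>
    if v.1 = (G.ends e₀).1 then G.ω (G.ends e₀).1 + G.ω (G.ends e₀).2 else G.ω v.1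
  γ := fun e => G.γ e.1

def mapEdges {L' : Type} (G : WGraph S L) (φ : L → L') : WGraph S L' where
  V := G.V
  E := G.E
  ends := G.ends
  ω := G.ω
  γ := φ ∘ G.γ

def stateGraph (G : WGraph S L) (A : Finset G.E) : SimpleGraph G.V :=
  SimpleGraph.fromRel (fun v w => ∃ e ∈ A, G.ends e = (v, w))

noncomputable instance (G : WGraph S L) (A : Finset G.E) :
    Fintype (G.stateGraph A).ConnectedComponent := Fintype.ofFinite _

noncomputable def kcomp (G : WGraph S L) (A : Finset G.E) : ℕ :=
  Fintype.card (G.stateGraph A).ConnectedComponent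

open scoped Classical in
noncomputable def compWeight [AddCommMonoid S] (G : WGraph S L) (A : Finset G.E)
    (c : (G.stateGraph A).ConnectedComponent) : S :=
  ∑ v ∈ Finset.univ.filter (fun v => (G.stateGraph A).connectedComponentMk v = c), G.ω v

end WGraph

/-- The variable-field q-state Potts Hamiltonian:
`h(σ) = -Σ_{e={i,j}} J_e δ(σ_i,σ_j) - Σ_i Σ_α M_{i,α} δ(α,σ_i)`. -/
noncomputable def pottsH (q : ℕ) (G : WGraph (Fin q → ℂ) ℂ) (σ : G.V → Fin q) : ℂ :=
  -(∑ e : G.E, G.γ e * (if σ (G.ends e).1 = σ (G.ends e).2 then 1 else 0))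
    - ∑ v : G.V, ∑ α : Fin q, G.ω v α * (if α = σ v then 1 else 0)

/-- The variable-field q-state Potts partition function `Z(G) = Σ_σ e^{-β h(σ)}`. -/
noncomputable def pottsZ (q : ℕ) (β : ℂ) (G : WGraph (Fin q → ℂ) ℂ) : ℂ :=
  ∑ σ : G.V → Fin q, Complex.exp (-β * pottsH q G σ)

namespace PottsAux

open Finset WGraph

/-- Product-form partition function. -/
noncomputable def Zaux (q : ℕ) (β : ℂ) (G : WGraph (Fin q → ℂ) ℂ) : ℂ :=
  ∑ σ : G.V → Fin q,
    (∏ e : G.E, if σ (G.ends e).1 = σ (G.ends e).2 then Complex.exp (β * G.γ e) else 1)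
      * ∏ v : G.V, Complex.exp (β * G.ω v (σ v))

lemma pottsZ_eq_Zaux (q : ℕ) (β : ℂ) (G : WGraph (Fin q → ℂ) ℂ) :
    pottsZ q β G = Zaux q β G := by
  unfold pottsZ Zaux pottsH
  refine Finset.sum_congr rfl fun σ _ => ?_
  have h1 : ∀ v : G.V, ∑ α : Fin q, G.ω v α * (if α = σ v then 1 else 0) = G.ω v (σ v) := by
    intro v
    rw [Finset.sum_eq_single (σ v)]
    · simp
    · intro b _ hb; simp [hb]
    · simp
  have : -β * (-(∑ e : G.E, G.γ e * (if σ (G.ends e).1 = σ (G.ends e).2 then 1 else 0))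
      - ∑ v : G.V, ∑ α : Fin q, G.ω v α * (if α = σ v then 1 else 0))
      = (∑ e : G.E, β * (G.γ e * (if σ (G.ends e).1 = σ (G.ends e).2 then 1 else 0)))
        + ∑ v : G.V, β * G.ω v (σ v) := by
    simp only [h1]
    rw [← Finset.mul_sum, ← Finset.mul_sum]
    ring
  rw [this, Complex.exp_add, Complex.exp_sum, Complex.exp_sum]
  congr 1
  refine Finset.prod_congr rfl fun e _ => ?_
  split_ifs <;> simp [Complex.exp_zero]

/-- Split a product over a fintype at one element, as a product over a subtype. -/
lemma prod_split {α : Type} [Fintype α] [DecidableEq α] (e₀ : α) (f : α → ℂ) :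
    ∏ e : α, f e = f e₀ * ∏ e : {e : α // e ≠ e₀}, f e.1 := by
  rw [← Finset.prod_subtype (Finset.univ.erase e₀) (fun x => by simp) f,
    Finset.mul_prod_erase _ _ (Finset.mem_univ e₀)]

lemma Zaux_empty (q : ℕ) (β : ℂ) (G : WGraph (Fin q → ℂ) ℂ) (h : IsEmpty G.E) :
    Zaux q β G = ∏ v : G.V, ∑ α : Fin q, Complex.exp (β * G.ω v α) := by
  unfold Zaux
  rw [Finset.prod_univ_sum]
  rw [Fintype.piFinset_univ]
  refine Finset.sum_congr rfl fun σ _ => ?_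
  rw [Finset.univ_eq_empty (α := G.E), Finset.prod_empty, one_mul]

lemma Zaux_loop (q : ℕ) (β : ℂ) (G : WGraph (Fin q → ℂ) ℂ) (e₀ : G.E) (h : G.IsLoop e₀) :
    Zaux q β G = Complex.exp (β * G.γ e₀) * Zaux q β (G.delete e₀) := by
  unfold Zaux
  rw [Finset.mul_sum]
  refine Finset.sum_congr rfl fun σ _ => ?_
  rw [prod_split e₀]
  have : (if σ (G.ends e₀).1 = σ (G.ends e₀).2 then Complex.exp (β * G.γ e₀) else 1)
      = Complex.exp (β * G.γ e₀) := by rw [if_pos]; rw [h]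
  rw [this]
  ring_nf
  rfl

lemma Zaux_nonloop (q : ℕ) (β : ℂ) (G : WGraph (Fin q → ℂ) ℂ) (e₀ : G.E)
    (h : ¬ G.IsLoop e₀) :
    Zaux q β G = Zaux q β (G.delete e₀)
      + (Complex.exp (β * G.γ e₀) - 1) * Zaux q β (G.contract e₀ h) := by
  classical
  set a := (G.ends e₀).1 with ha
  set b := (G.ends e₀).2 with hb
  -- split the e₀ factor as 1 + (exp - 1)·δ
  have key : ∀ σ : G.V → Fin q,
      (∏ e : G.E, if σ (G.ends e).1 = σ (G.ends e).2 then Complex.exp (β * G.γ e) else 1)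
        * ∏ v : G.V, Complex.exp (β * G.ω v (σ v))
      = ((∏ e : {e : G.E // e ≠ e₀},
            if σ (G.ends e.1).1 = σ (G.ends e.1).2 then Complex.exp (β * G.γ e.1) else 1)
          * ∏ v : G.V, Complex.exp (β * G.ω v (σ v)))
        + (Complex.exp (β * G.γ e₀) - 1) *
          (if σ a = σ b then
            (∏ e : {e : G.E // e ≠ e₀},
              if σ (G.ends e.1).1 = σ (G.ends e.1).2 then Complex.exp (β * G.γ e.1) else 1)
              * ∏ v : G.V, Complex.exp (β * G.ω v (σ v))
           else 0) := by
    intro σ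
    rw [prod_split e₀]
    split_ifs with hσ
    · ring
    · ring
  unfold Zaux
  rw [Finset.sum_congr rfl fun σ _ => key σ, Finset.sum_add_distrib, ← Finset.mul_sum]
  congr 1
  refine congrArg (fun z => (Complex.exp (β * G.γ e₀) - 1) * z) ?_
  -- now the contraction bijection
  rw [← Finset.sum_filter]
  have hab : ¬ (a = b) := h
  refine Finset.sum_nbij' (fun σ => fun v : (G.contract e₀ h).V => σ v.1)
    (fun σ' => fun v : G.V => σ' (if hv : v = b then ⟨a, h⟩ else ⟨v, hv⟩))
    (fun σ _ => Finset.mem_univ _) ?_ ?_ ?_ ?_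
  · -- j maps into the filter set
    intro σ' _
    refine Finset.mem_filter.mpr ⟨Finset.mem_univ _, ?_⟩
    show σ' (if hv : a = b then ⟨a, h⟩ else ⟨a, hv⟩)
        = σ' (if hv : b = b then ⟨a, h⟩ else ⟨b, hv⟩)
    erw [dif_neg hab, dif_pos rfl]
  · -- left inverse
    intro σ hσ
    simp only [Finset.mem_filter, Finset.mem_univ, true_and] at hσ
    funext v
    show σ (Subtype.val ((if hv : v = b then ⟨a, h⟩ else ⟨v, hv⟩) : {v : G.V // v ≠ b})) = σ v
    by_cases hv : v = b
    · rw [dif_pos hv]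
      show σ a = σ v
      rw [hv]
      exact hσ
    · rw [dif_neg hv]
  · -- right inverse
    intro σ' _
    funext v
    show σ' (if hv : v.1 = b then ⟨a, h⟩ else ⟨v.1, hv⟩) = σ' v
    erw [dif_neg (show ¬ (v.1 = b) from v.2)]
    exact congrArg σ' (Subtype.ext rfl)
  · -- the summands agree
    intro σ hσ
    simp only [Finset.mem_filter, Finset.mem_univ, true_and] at hσ
    beta_reduce
    congr 1
    · -- edge factors
      refine Finset.prod_congr rfl fun e _ => ?_
      have h1 : σ (G.ends e.1).1 = σ (((G.contract e₀ h).ends e).1).1 := by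
        show σ (G.ends e.1).1
            = σ (Subtype.val ((if hv : (G.ends e.1).1 = b then ⟨a, h⟩
                else ⟨(G.ends e.1).1, hv⟩) : {v : G.V // v ≠ b}))
        by_cases hv : (G.ends e.1).1 = b
        · rw [dif_pos hv]
          show σ (G.ends e.1).1 = σ a
          rw [hv]
          exact hσ.symm
        · rw [dif_neg hv]
      have h2 : σ (G.ends e.1).2 = σ (((G.contract e₀ h).ends e).2).1 := by
        show σ (G.ends e.1).2
            = σ (Subtype.val ((if hv : (G.ends e.1).2 = b then ⟨a, h⟩
                else ⟨(G.ends e.1).2, hv⟩) : {v : G.V // v ≠ b}))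
        by_cases hv : (G.ends e.1).2 = b
        · rw [dif_pos hv]
          show σ (G.ends e.1).2 = σ a
          rw [hv]
          exact hσ.symm
        · rw [dif_neg hv]
      rw [h1, h2]
      rfl
    · -- vertex factors
      rw [prod_split (α := G.V) b (fun v => Complex.exp (β * G.ω v (σ v)))]
      have hRHS : ∀ v : (G.contract e₀ h).V,
          Complex.exp (β * (G.contract e₀ h).ω v (σ v.1))
          = Complex.exp (β * G.ω v.1 (σ v.1)) *
            (if v = (⟨a, h⟩ : (G.contract e₀ h).V) then Complex.exp (β * G.ω b (σ v.1)) else 1) := by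
        intro v
        show Complex.exp (β * (if v.1 = a then G.ω a + G.ω b else G.ω v.1) (σ v.1)) = _
        by_cases hv : v.1 = a
        · rw [if_pos hv]
          simp only [if_pos (show v = (⟨a, h⟩ : (G.contract e₀ h).V) from Subtype.ext hv),
            Pi.add_apply, mul_add, Complex.exp_add, hv]
        · rw [if_neg hv]
          simp only [if_neg (show ¬ v = (⟨a, h⟩ : (G.contract e₀ h).V) from
            fun hh => hv (congrArg Subtype.val hh)), mul_one]
      rw [Finset.prod_congr rfl fun v _ => hRHS v, Finset.prod_mul_distrib]
      have hp : (∏ x : (G.contract e₀ h).V, if x = (⟨a, h⟩ : (G.contract e₀ h).V)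
          then Complex.exp (β * G.ω b (σ x.1)) else 1) = Complex.exp (β * G.ω b (σ a)) :=
        (Finset.prod_eq_single _ (fun x _ hx => if_neg hx)
          (fun hx => absurd (Finset.mem_univ _) hx)).trans (if_pos rfl)
      rw [hp]
      rw [mul_comm]
      congr 1
      show Complex.exp (β * G.ω b (σ b)) = Complex.exp (β * G.ω b (σ a))
      rw [hσ]

end PottsAux


/-- main theorem: the variable-field Potts partition function is the evaluation
of the V-polynomial with vertex weights `ω(v_i) = M_i ∈ ℂ^q`, variables `x_M = X_M = Σ_α e^{βM_α}`
and edge weights `γ_e = e^{βJ_e} - 1`. -/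
theorem pottsZ_eq_V (q : ℕ) (β : ℂ) (Vpoly : WGraph (Fin q → ℂ) ℂ → ℂ)
    (hV1 : ∀ (G : WGraph (Fin q → ℂ) ℂ) (e : G.E) (h : ¬ G.IsLoop e),
      Vpoly G = Vpoly (G.delete e) + G.γ e * Vpoly (G.contract e h))
    (hV2 : ∀ (G : WGraph (Fin q → ℂ) ℂ) (e : G.E), G.IsLoop e →
      Vpoly G = (G.γ e + 1) * Vpoly (G.delete e))
    (hV3 : ∀ G : WGraph (Fin q → ℂ) ℂ, IsEmpty G.E →
      Vpoly G = ∏ v : G.V, ∑ α : Fin q, Complex.exp (β * G.ω v α)) :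
    ∀ G : WGraph (Fin q → ℂ) ℂ,
      pottsZ q β G = Vpoly (G.mapEdges (fun J => Complex.exp (β * J) - 1)) := by
    classical
  set φ : ℂ → ℂ := fun J => Complex.exp (β * J) - 1 with hφ
  suffices H : ∀ n (G : WGraph (Fin q → ℂ) ℂ), Fintype.card G.E = n →
      PottsAux.Zaux q β G = Vpoly (G.mapEdges φ) by
    intro G
    rw [PottsAux.pottsZ_eq_Zaux]
    exact H _ G rfl
  intro n
  induction n with
  | zero =>
    intro G hG
    have hE : IsEmpty G.E := Fintype.card_eq_zero_iff.mp hG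
    rw [PottsAux.Zaux_empty q β G hE, hV3 (G.mapEdges φ) hE]
    rfl
  | succ n ih =>
    intro G hG
    have hNE : Nonempty G.E := Fintype.card_pos_iff.mp (by omega)
    obtain ⟨e₀⟩ := hNE
    have hcard : Fintype.card {e : G.E // e ≠ e₀} = n := by
      have h1 : Fintype.card {e : G.E // ¬ (e = e₀)} = Fintype.card G.E
          - Fintype.card {e : G.E // e = e₀} := Fintype.card_subtype_compl _
      rw [Fintype.card_subtype_eq] at h1
      have h2 : Fintype.card {e : G.E // e ≠ e₀}
          = Fintype.card {e : G.E // ¬ (e = e₀)} := rfl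
      omega
    by_cases hl : G.IsLoop e₀
    · rw [PottsAux.Zaux_loop q β G e₀ hl, hV2 (G.mapEdges φ) e₀ hl,
        ih (G.delete e₀) hcard]
      congr 1
      show Complex.exp (β * G.γ e₀) = (Complex.exp (β * G.γ e₀) - 1) + 1
      ring
    · rw [PottsAux.Zaux_nonloop q β G e₀ hl, hV1 (G.mapEdges φ) e₀ hl,
        ih (G.delete e₀) hcard, ih (G.contract e₀ hl) hcard]
      rfl
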